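/- There exists an absolute constant C > 0 with the following property. For every probability mass function p on ℕ and every z ∈ ℂ with Re z ≥ 1 and |arg z| ≤ π/4, the derivative of the analytic function ṽ satisfies |ṽ'(z)| = |∑_j p_j (1 − 3e^{−p_j z} + 2e^{−2p_j z} + 2 p_j z e^{−p_j z})| ≤ C · ṽ(|z|) / |z|. -/

import Mathlib

open Real Complex

/-- `ṽ(z) = ∑_j (p_j z + e^{−p_j z}(1 − e^{−p_j z} − 2 p_j z))` for complex `z`
with `Re z ≥ 0`. For real `x ≥ 0` this is real and nonnegative; we take its
real part for the real-variable version. -/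
noncomputable def vtilC (p : ℕ → ℝ) (z : ℂ) : ℂ :=
  ∑' j, ((p j : ℂ) * z
    + Complex.exp (-(p j : ℂ) * z) * (1 - Complex.exp (-(p j : ℂ) * z) - 2 * (p j : ℂ) * z))

/-- The real version `ṽ(x)` for real `x`. -/
noncomputable def vtilR (p : ℕ → ℝ) (x : ℝ) : ℝ :=
  ∑' j, (p j * x + Real.exp (-(p j) * x) * (1 - Real.exp (-(p j) * x) - 2 * p j * x))

/- ### Auxiliary lemmas -/

lemma vtil_exp_quad (u : ℝ) (hu : 0 ≤ u) : Real.exp (-u) * (1 + u + u^2/4) ≤ 1 := by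
  have h1 : (1 + u/2) ≤ Real.exp (u/2) := by linarith [Real.add_one_le_exp (u/2)]
  have h2 : (1 + u/2)^2 ≤ Real.exp (u/2) ^ 2 := by nlinarith
  have h3 : Real.exp (u/2) ^ 2 = Real.exp u := by
    rw [pow_two, ← Real.exp_add]; ring_nf
  have h6 : Real.exp (-u) * Real.exp u = 1 := by
    rw [← Real.exp_add]; simp
  nlinarith [Real.exp_pos (-u), Real.exp_pos u]

/-- lower bound for `f(u)` when `u ≤ 1` -/
lemma vtil_f_small (u : ℝ) (hu : 0 ≤ u) (hu1 : u ≤ 1) :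
    u^2/21 ≤ u + Real.exp (-u) * (1 - Real.exp (-u) - 2*u) := by
  set t := Real.exp (-u) with ht
  have h0 : 0 < t := Real.exp_pos _
  have h1 : 1 - u ≤ t := by linarith [Real.add_one_le_exp (-u)]
  have h2 : t * (1 + u + u^2/4) ≤ 1 := vtil_exp_quad u hu
  nlinarith [mul_nonneg (sub_nonneg.2 h1) (sub_nonneg.2 h2),
    mul_nonneg hu (mul_nonneg (sub_nonneg.2 h1) (sub_nonneg.2 h2)),
    mul_nonneg hu (sub_nonneg.2 hu1), mul_nonneg (mul_nonneg hu hu) (sub_nonneg.2 hu1),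
    sq_nonneg (t - (1-u)), mul_nonneg hu (sub_nonneg.2 h2), h0.le]

/-- lower bound for `f(u)` when `u ≥ 1` -/
lemma vtil_f_large (u : ℝ) (hu : 1 ≤ u) :
    u/9 ≤ u + Real.exp (-u) * (1 - Real.exp (-u) - 2*u) := by
  set t := Real.exp (-u) with ht
  have h0 : 0 < t := Real.exp_pos _
  have h2 : t * (1 + u + u^2/4) ≤ 1 := vtil_exp_quad u (by linarith)
  have h3 : t ≤ 1 := by nlinarith
  nlinarith [mul_nonneg h0.le (sub_nonneg.2 h3),
    mul_nonneg (mul_nonneg h0.le h0.le) (by linarith : (0:ℝ) ≤ u - 1),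
    mul_nonneg h0.le (by linarith : (0:ℝ) ≤ u - 1), sq_nonneg (u-1)]

lemma vtil_f_nonneg (u : ℝ) (hu : 0 ≤ u) :
    0 ≤ u + Real.exp (-u) * (1 - Real.exp (-u) - 2*u) := by
  rcases le_total u 1 with h | h
  · nlinarith [vtil_f_small u hu h, sq_nonneg u]
  · linarith [vtil_f_large u h]

lemma vtil_f_le (u : ℝ) (hu : 0 ≤ u) :
    u + Real.exp (-u) * (1 - Real.exp (-u) - 2*u) ≤ 2 * u := by
  set t := Real.exp (-u) with ht
  have h0 : 0 < t := Real.exp_pos _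
  have h1 : 1 - u ≤ t := by linarith [Real.add_one_le_exp (-u)]
  have h3 : t ≤ 1 := Real.exp_le_one_iff.mpr (by linarith)
  nlinarith [mul_nonneg h0.le hu]

lemma vtil_x_exp (x : ℝ) (hx : 0 ≤ x) : x * Real.exp (-(x / Real.sqrt 2)) ≤ 1 := by
  have hs : Real.sqrt 2 ^ 2 = 2 := Real.sq_sqrt (by norm_num)
  have hs1 : 1 ≤ Real.sqrt 2 := by nlinarith [Real.sqrt_nonneg 2]
  have h := vtil_exp_quad (x / Real.sqrt 2) (by positivity)
  set y := x / Real.sqrt 2 with hy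
  have hy0 : 0 ≤ y := by positivity
  have hxy : x = y * Real.sqrt 2 := by rw [hy, div_mul_cancel₀ _ (by positivity)]
  have key : x ≤ 1 + y + y^2/4 := by
    rw [hxy]; nlinarith [sq_nonneg (y - 2*(Real.sqrt 2 - 1))]
  calc x * Real.exp (-y) ≤ (1 + y + y^2/4) * Real.exp (-y) := by
        nlinarith [Real.exp_pos (-y)]
    _ ≤ 1 := by nlinarith [Real.exp_pos (-y)]

lemma vtil_bound14 (w : ℂ) (hw : ‖w‖ ≤ 1) :
    ‖(1 - 3 * Complex.exp (-w) + 2 * Complex.exp (-2*w) + 2*w*Complex.exp (-w))‖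
      ≤ 14 * ‖w‖ := by
  set E := Complex.exp (-w) with hE
  have hE2 : Complex.exp (-2*w) = E * E := by rw [hE, ← Complex.exp_add]; ring_nf
  have hg : 1 - 3 * E + 2 * (E*E) + 2*w*E
      = (w + (E - 1 + w)) + 2*(1-E)^2 - 2*(w*(1-E)) := by ring
  rw [hE2, hg]
  have h0 : 0 ≤ ‖w‖ := norm_nonneg w
  have h1 : ‖(E - 1 + w)‖ ≤ ‖w‖ ^ 2 := by
    have := Complex.norm_exp_sub_one_sub_id_le (x := -w) (by simpa using hw)
    simpa [sub_eq_add_neg, hE] using this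
  have h2 : ‖(1 - E)‖ ≤ 2 * ‖w‖ := by
    rw [norm_sub_rev]
    simpa [hE] using Complex.norm_exp_sub_one_le (x := -w) (by simpa using hw)
  have t1 : ‖(w + (E - 1 + w))‖ ≤ ‖w‖ + ‖w‖ ^ 2 :=
    (norm_add_le _ _).trans (by gcongr)
  have t2 : ‖(2*(1-E)^2)‖ ≤ 2 * (2*‖w‖)^2 := by
    simp only [norm_mul, Complex.norm_ofNat, norm_pow]
    gcongr
  have t3 : ‖(2*(w*(1-E)))‖ ≤ 2 * (‖w‖ * (2*‖w‖)) := by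
    simp only [norm_mul, Complex.norm_ofNat]
    gcongr
  have tri : ‖((w + (E - 1 + w)) + 2*(1-E)^2 - 2*(w*(1-E)))‖
      ≤ ‖(w + (E - 1 + w))‖ + ‖(2*(1-E)^2)‖ + ‖(2*(w*(1-E)))‖ :=
    (norm_sub_le _ _).trans (by gcongr; exact norm_add_le _ _)
  nlinarith

lemma vtil_bound8 (w : ℂ) (h : ‖w‖ / Real.sqrt 2 ≤ w.re) :
    ‖(1 - 3 * Complex.exp (-w) + 2 * Complex.exp (-2*w) + 2*w*Complex.exp (-w))‖
      ≤ 8 := by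
  have h0 : 0 ≤ ‖w‖ := norm_nonneg w
  have hre : 0 ≤ w.re := le_trans (by positivity) h
  have e1 : ‖(Complex.exp (-w))‖ = Real.exp (-w.re) := by
    rw [Complex.norm_exp]; simp
  have le1 : Real.exp (-w.re) ≤ 1 := Real.exp_le_one_iff.mpr (by linarith)
  have le2 : Real.exp (-(2*w.re)) ≤ 1 := Real.exp_le_one_iff.mpr (by linarith)
  have key : ‖w‖ * Real.exp (-w.re) ≤ 1 := by
    have hmono : Real.exp (-w.re) ≤ Real.exp (-(‖w‖ / Real.sqrt 2)) :=
      Real.exp_le_exp.mpr (by linarith)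
    have hx := vtil_x_exp (‖w‖) h0
    nlinarith [Real.exp_pos (-w.re)]
  have tri : ‖(1 - 3 * Complex.exp (-w) + 2 * Complex.exp (-2*w) + 2*w*Complex.exp (-w))‖
      ≤ 1 + 3 * Real.exp (-w.re) + 2 * Real.exp (-(2*w.re)) + 2 * (‖w‖ * Real.exp (-w.re)) := by
    calc ‖(1 - 3 * Complex.exp (-w) + 2 * Complex.exp (-2*w) + 2*w*Complex.exp (-w))‖
        ≤ ‖(1 - 3 * Complex.exp (-w))‖ + ‖(2 * Complex.exp (-2*w))‖
          + ‖(2*w*Complex.exp (-w))‖ := by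
          refine (norm_add_le _ _).trans ?_
          gcongr
          exact norm_add_le _ _
      _ ≤ (1 + 3 * Real.exp (-w.re)) + 2 * Real.exp (-(2*w.re)) + 2 * (‖w‖ * Real.exp (-w.re)) := by
          gcongr ?_ + ?_ + ?_
          · refine (norm_sub_le _ _).trans ?_
            simp [e1, norm_mul]
          · apply le_of_eq; rw [norm_mul, Complex.norm_exp]; norm_num
          · simp [e1, norm_mul, mul_assoc]
      _ = _ := by ring
  linarith

/-- Combined pointwise bound: `|w| ⬝ |g(w)| ≤ 300 f(|w|)`. -/
lemma vtil_pointwise (w : ℂ) (h : ‖w‖ / Real.sqrt 2 ≤ w.re) :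
    ‖w‖ *
      ‖(1 - 3 * Complex.exp (-w) + 2 * Complex.exp (-2*w) + 2*w*Complex.exp (-w))‖
      ≤ 300 * (‖w‖
        + Real.exp (-(‖w‖)) * (1 - Real.exp (-(‖w‖)) - 2 * ‖w‖)) := by
  have h0 : 0 ≤ ‖w‖ := norm_nonneg w
  rcases le_total (‖w‖) 1 with hu | hu
  · have hb := vtil_bound14 w hu
    have hf := vtil_f_small (‖w‖) h0 hu
    have habs : 0 ≤ ‖(1 - 3 * Complex.exp (-w) + 2 * Complex.exp (-2*w)
        + 2*w*Complex.exp (-w))‖ := norm_nonneg _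
    nlinarith
  · have hb := vtil_bound8 w h
    have hf := vtil_f_large (‖w‖) hu
    have habs : 0 ≤ ‖(1 - 3 * Complex.exp (-w) + 2 * Complex.exp (-2*w)
        + 2*w*Complex.exp (-w))‖ := norm_nonneg _
    nlinarith


/-- Per-term bound in the final sum. -/
lemma vtil_per_term (pj x : ℝ) (z : ℂ) (hpj : 0 ≤ pj) (hx : ‖z‖ = x)
    (h1x : 1 ≤ x) (hre : x / Real.sqrt 2 ≤ z.re) :
    ‖((pj:ℂ) * (1 - 3 * Complex.exp (-(pj:ℂ) * z)
        + 2 * Complex.exp (-2 * (pj:ℂ) * z) + 2 * (pj:ℂ) * z * Complex.exp (-(pj:ℂ) * z)))‖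
      ≤ 300 / x * (pj * x + Real.exp (-(pj * x)) * (1 - Real.exp (-(pj * x)) - 2 * (pj * x))) := by
  have hx0 : (0:ℝ) < x := by linarith
  have e1 : -(pj:ℂ) * z = -((pj:ℂ)*z) := by ring
  have e2 : -2 * (pj:ℂ) * z = -2 * ((pj:ℂ)*z) := by ring
  have e3 : 2 * (pj:ℂ) * z = 2 * ((pj:ℂ)*z) := by ring
  rw [e1, e2, e3]
  set w := (pj:ℂ) * z with hw
  have hwabs : ‖w‖ = pj * x := by
    rw [hw, norm_mul, Complex.norm_of_nonneg hpj, hx]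
  have hwre : ‖w‖ / Real.sqrt 2 ≤ w.re := by
    have hwre2 : w.re = pj * z.re := by
      rw [hw]; simp [Complex.mul_re]
    rw [hwabs, hwre2, mul_div_assoc]
    exact mul_le_mul_of_nonneg_left hre hpj
  have hpt := vtil_pointwise w hwre
  rw [hwabs] at hpt
  rw [norm_mul, Complex.norm_of_nonneg hpj]
  rw [div_mul_eq_mul_div, le_div_iff₀ hx0]
  calc pj * ‖(1 - 3 * Complex.exp (-w) + 2 * Complex.exp (-2*w)
          + 2*w*Complex.exp (-w))‖ * x
      = (pj * x) * ‖(1 - 3 * Complex.exp (-w) + 2 * Complex.exp (-2*w)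
          + 2*w*Complex.exp (-w))‖ := by ring
    _ ≤ 300 * (pj * x + Real.exp (-(pj * x)) * (1 - Real.exp (-(pj * x)) - 2 * (pj * x))) := hpt
    _ = _ := by ring

/-- Lemma 6.8: for `Re z ≥ 1` and `|arg z| ≤ π/4`, the termwise
derivative of `ṽ` satisfies `|ṽ'(z)| ≤ C ṽ(|z|)/|z|` with an absolute constant. -/
theorem vtil_deriv_bound :
    ∃ C : ℝ, 0 < C ∧
      ∀ (p : ℕ → ℝ), (∀ j, 0 ≤ p j) → (∑' j, p j) = 1 →
      ∀ z : ℂ, 1 ≤ z.re → |Complex.arg z| ≤ π / 4 →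
        ‖(∑' j, ((p j : ℂ) * (1 - 3 * Complex.exp (-(p j : ℂ) * z)
            + 2 * Complex.exp (-2 * (p j : ℂ) * z)
            + 2 * (p j : ℂ) * z * Complex.exp (-(p j : ℂ) * z))))‖
          ≤ C * vtilR p (‖z‖) / ‖z‖ := by
  refine ⟨300, by norm_num, ?_⟩
  intro p hp hsum z hzre harg
  set x := ‖z‖ with hxdef
  have hp_sum : Summable p := by
    by_contra hns
    rw [tsum_eq_zero_of_not_summable hns] at hsum
    norm_num at hsum
  have hx1 : 1 ≤ x := le_trans hzre (Complex.re_le_norm z)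
  have hx0 : 0 < x := by linarith
  have hz0 : z ≠ 0 := by
    intro hz; rw [hz] at hzre; simp at hzre; linarith
  have hs : Real.sqrt 2 ^ 2 = 2 := Real.sq_sqrt (by norm_num)
  have hs1 : 1 ≤ Real.sqrt 2 := by nlinarith [Real.sqrt_nonneg 2]
  -- z.re ≥ x / √2
  have hcos : Real.sqrt 2 / 2 ≤ Real.cos (Complex.arg z) := by
    rw [← Real.cos_abs, ← Real.cos_pi_div_four]
    apply Real.cos_le_cos_of_nonneg_of_le_pi (abs_nonneg _) _ harg
    linarith [Real.pi_gt_three]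
  have hre2 : x / Real.sqrt 2 ≤ z.re := by
    have := Complex.cos_arg hz0
    have hzx : z.re = x * Real.cos (Complex.arg z) := by
      rw [this]; field_simp; exact hxdef.symm
    rw [hzx, div_le_iff₀ (by linarith : (0:ℝ) < Real.sqrt 2)]
    nlinarith
  set F : ℕ → ℝ := fun j => p j * x
      + Real.exp (-(p j) * x) * (1 - Real.exp (-(p j) * x) - 2 * p j * x) with hFdef
  have hFj : ∀ j, F j = (p j * x)
      + Real.exp (-(p j * x)) * (1 - Real.exp (-(p j * x)) - 2 * (p j * x)) := by
    intro j; simp only [hFdef, neg_mul, mul_assoc]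
  have hxnn : (0:ℝ) ≤ x := hx0.le
  have hFnn : ∀ j, 0 ≤ F j := by
    intro j; rw [hFj j]
    exact vtil_f_nonneg (p j * x) (mul_nonneg (hp j) hxnn)
  have hFle : ∀ j, F j ≤ 2 * x * p j := by
    intro j; rw [hFj j]
    have := vtil_f_le (p j * x) (mul_nonneg (hp j) hxnn)
    nlinarith
  have hFsummable : Summable F :=
    Summable.of_nonneg_of_le hFnn hFle (hp_sum.mul_left (2*x))
  set G : ℕ → ℂ := fun j => ((p j : ℂ) * (1 - 3 * Complex.exp (-(p j : ℂ) * z)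
      + 2 * Complex.exp (-2 * (p j : ℂ) * z)
      + 2 * (p j : ℂ) * z * Complex.exp (-(p j : ℂ) * z))) with hGdef
  have hGbound : ∀ j, ‖G j‖ ≤ 300 / x * F j := by
    intro j
    rw [hFj j]
    exact vtil_per_term (p j) x z (hp j) rfl hx1 hre2
  have hGnormsum : Summable (fun j => ‖G j‖) :=
    Summable.of_nonneg_of_le (fun j => norm_nonneg _) hGbound (hFsummable.mul_left (300/x))
  calc ‖(∑' j, G j)‖ = ‖∑' j, G j‖ := rfl
    _ ≤ ∑' j, ‖G j‖ := norm_tsum_le_tsum_norm hGnormsum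
    _ ≤ ∑' j, (300/x * F j) := Summable.tsum_le_tsum hGbound hGnormsum (hFsummable.mul_left _)
    _ = 300/x * ∑' j, F j := tsum_mul_left
    _ = 300 * vtilR p x / x := by rw [vtilR]; ring
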